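/- Complete invariants for the diagonal SO₃-action on tuples of real quaternions: let v, w : Fin m → ℍ. Then the following are equivalent: (1) (v i).re = (w i).re for all i, and ((v i − star (v i)) * (v j − star (v j))).re = ((w i − star (w i)) * (w j − star (w j))).re for all i, j, and ((v i − star (v i)) * (v j − star (v j)) * (v l − star (v l))).re = ((w i − star (w i)) * (w j − star (w j)) * (w l − star (w l))).re for all i, j, l; (2) there exists a special orthogonal matrix R : Matrix (Fin 3) (Fin 3) ℝ (Rᵀ * R = 1, det R = 1) such that for all i, (w i).re = (v i).re and R.mulVec (imVec (v i)) = imVec (w i). -/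

import Mathlib

open Matrix

/-- The imaginary part of a quaternion as a vector in `Fin 3 → ℝ`. -/
def imVec (q : Quaternion ℝ) : Fin 3 → ℝ := ![q.imI, q.imJ, q.imK]

section Aux
open Module Submodule RealInnerProductSpace

private lemma imVec_pair_re (a b : Quaternion ℝ) :
    ((a - star a) * (b - star b)).re = -4 * (imVec a ⬝ᵥ imVec b) := by
  simp [imVec, Quaternion.re_mul, dotProduct, Fin.sum_univ_three]
  ring

private lemma imVec_triple_re (a b c : Quaternion ℝ) :
    ((a - star a) * (b - star b) * (c - star c)).re
      = -8 * (Matrix.of ![imVec a, imVec b, imVec c]).det := by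
  simp [imVec, Quaternion.re_mul, Quaternion.imI_mul, Quaternion.imJ_mul, Quaternion.imK_mul,
    Matrix.det_fin_three]
  ring

private lemma dot_pres {R : Matrix (Fin 3) (Fin 3) ℝ} (hR : Rᵀ * R = 1) (a b : Fin 3 → ℝ) :
    R.mulVec a ⬝ᵥ R.mulVec b = a ⬝ᵥ b := by
  rw [Matrix.dotProduct_mulVec, ← Matrix.mulVec_transpose, Matrix.mulVec_mulVec, hR,
    Matrix.one_mulVec]

private lemma rows_mul (R M : Matrix (Fin 3) (Fin 3) ℝ) (x y z : Fin 3 → ℝ)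
    (hx : R.mulVec x = M 0) (hy : R.mulVec y = M 1) (hz : R.mulVec z = M 2) :
    M = Matrix.of ![x, y, z] * Rᵀ := by
  ext k c
  have h : ∀ u : Fin 3 → ℝ, ∀ c, (R.mulVec u) c = ∑ s, u s * R c s := by
    intro u c; simp [Matrix.mulVec, dotProduct, mul_comm]
  fin_cases k
  · show M 0 c = _; rw [← hx, h]; simp [Matrix.mul_apply]
  · show M 1 c = _; rw [← hy, h]; simp [Matrix.mul_apply]
  · show M 2 c = _; rw [← hz, h]; simp [Matrix.mul_apply]

private abbrev E3 := EuclideanSpace ℝ (Fin 3)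

private lemma inner_eq_dot (x y : E3) : ⟪x, y⟫ = (x : Fin 3 → ℝ) ⬝ᵥ (y : Fin 3 → ℝ) := by
  simp [PiLp.inner_apply, dotProduct, mul_comm]

private noncomputable def matOf (T : E3 ≃ₗᵢ[ℝ] E3) : Matrix (Fin 3) (Fin 3) ℝ :=
  Matrix.of fun a b => T (EuclideanSpace.single b 1) a

private lemma matOf_toLin' (T : E3 ≃ₗᵢ[ℝ] E3) :
    Matrix.toLin' (matOf T) = ((WithLp.linearEquiv 2 ℝ (Fin 3 → ℝ)) : E3 →ₗ[ℝ] (Fin 3 → ℝ))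
      ∘ₗ (T.toLinearEquiv : E3 →ₗ[ℝ] E3)
      ∘ₗ (((WithLp.linearEquiv 2 ℝ (Fin 3 → ℝ)).symm : (Fin 3 → ℝ) →ₗ[ℝ] E3)) := by
  apply Module.Basis.ext (Pi.basisFun ℝ (Fin 3))
  intro j
  funext a
  rw [Pi.basisFun_apply, Matrix.toLin'_apply]
  show (matOf T).mulVec (Pi.single j 1) a = T (EuclideanSpace.single j 1) a
  simp [Matrix.mulVec, dotProduct, Pi.single_apply, matOf, Finset.sum_ite_eq']

private lemma matOf_mulVec (T : E3 ≃ₗᵢ[ℝ] E3) (x : Fin 3 → ℝ) :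
    (matOf T).mulVec x = (T (WithLp.toLp 2 x) : Fin 3 → ℝ) := by
  rw [← Matrix.toLin'_apply, matOf_toLin']
  rfl

private lemma matOf_det (T : E3 ≃ₗᵢ[ℝ] E3) :
    (matOf T).det = LinearMap.det (T.toLinearEquiv : E3 →ₗ[ℝ] E3) := by
  rw [← LinearMap.det_toLin', matOf_toLin', LinearMap.det_conj]

private lemma matOf_orth (T : E3 ≃ₗᵢ[ℝ] E3) : (matOf T)ᵀ * matOf T = 1 := by
  ext a b
  have h : ((matOf T)ᵀ * matOf T) a b
      = ⟪T (EuclideanSpace.single a 1), T (EuclideanSpace.single b 1)⟫ := by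
    rw [inner_eq_dot]
    simp [Matrix.mul_apply, matOf, dotProduct]
  rw [h, T.inner_map_map, inner_eq_dot]
  simp [Matrix.one_apply, dotProduct, EuclideanSpace.single_apply, Finset.sum_ite_eq', eq_comm]

private noncomputable def Lneg : E3 ≃ₗᵢ[ℝ] E3 :=
  LinearIsometryEquiv.piLpCongrRight 2
    (fun i : Fin 3 => if i = 2 then LinearIsometryEquiv.neg ℝ else LinearIsometryEquiv.refl ℝ ℝ)

private lemma Lneg_apply (x : E3) (i : Fin 3) : Lneg x i = if i = 2 then -(x i) else x i := by
  simp only [Lneg, LinearIsometryEquiv.piLpCongrRight_apply, PiLp.toLp_apply]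
  by_cases h : i = 2
  · rw [if_pos h, if_pos h]; rfl
  · rw [if_neg h, if_neg h]; rfl

private lemma Lneg_single (k : Fin 3) (hk : k ≠ 2) :
    Lneg (EuclideanSpace.single k 1) = EuclideanSpace.single k 1 := by
  ext i
  rw [Lneg_apply]
  by_cases h : i = 2
  · subst h
    rw [if_pos rfl, EuclideanSpace.single_apply, if_neg (Ne.symm hk)]
    norm_num
  · rw [if_neg h]

private lemma Lneg_det : LinearMap.det (Lneg.toLinearEquiv : E3 →ₗ[ℝ] E3) = -1 := by
  classical
  set b := PiLp.basisFun 2 ℝ (Fin 3)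
  rw [← LinearMap.det_toMatrix b]
  have hM : ∀ i j, LinearMap.toMatrix b b (Lneg.toLinearEquiv : E3 →ₗ[ℝ] E3) i j
      = (Matrix.of ![![(1:ℝ),0,0],![0,1,0],![0,0,-1]]) i j := by
    intro i j
    rw [LinearMap.toMatrix_apply, PiLp.basisFun_repr]
    show Lneg (b j) i = _
    rw [Lneg_apply]
    have hbj : ∀ i, (b j : E3) i = (Pi.single j (1:ℝ) : Fin 3 → ℝ) i := by
      intro i
      rw [show (b j : E3) = (WithLp.equiv 2 _).symm (Pi.single j 1) from
        PiLp.basisFun_apply 2 ℝ (Fin 3) j]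
      rfl
    rw [hbj]
    fin_cases i <;> fin_cases j <;> simp [Pi.single_apply, Matrix.vecHead, Matrix.vecTail]
  have : LinearMap.toMatrix b b (Lneg.toLinearEquiv : E3 →ₗ[ℝ] E3)
      = Matrix.of ![![(1:ℝ),0,0],![0,1,0],![0,0,-1]] := by
    ext i j; exact hM i j
  rw [this, Matrix.det_fin_three]
  simp

private lemma rank_le_two_of_dets_zero {m : ℕ} (X : Fin m → E3)
    (h : ∀ i j l, (Matrix.of ![(X i : Fin 3 → ℝ), X j, X l]).det = 0) :
    finrank ℝ (span ℝ (Set.range X)) ≤ 2 := by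
  classical
  by_contra h3
  push_neg at h3
  have hstep : ∀ (K : Submodule ℝ E3), finrank ℝ K ≤ 2 → ∃ i, X i ∉ K := by
    intro K hK
    by_contra hall
    push_neg at hall
    have hle : span ℝ (Set.range X) ≤ K := by
      rw [span_le]
      rintro x ⟨i, rfl⟩
      exact hall i
    have := Submodule.finrank_mono hle
    omega
  obtain ⟨i₀, hi₀⟩ := hstep ⊥ (by simp)
  have hx0 : X i₀ ≠ 0 := by simpa using hi₀
  obtain ⟨j₀, hj₀⟩ := hstep (span ℝ {X i₀}) (by
    have := finrank_span_le_card (R := ℝ) ({X i₀} : Set E3)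
    simp at this
    omega)
  obtain ⟨l₀, hl₀⟩ := hstep (span ℝ {X j₀, X i₀}) (by
    have := finrank_span_le_card (R := ℝ) ({X j₀, X i₀} : Set E3)
    refine le_trans this ?_
    rw [Set.toFinset_insert]
    refine le_trans (Finset.card_insert_le _ _) ?_
    simp)
  have hind : LinearIndependent ℝ ![X l₀, X j₀, X i₀] := by
    rw [show ![X l₀, X j₀, X i₀] = Fin.cons (X l₀) ![X j₀, X i₀] from rfl,
      linearIndependent_fin_cons]
    constructor
    · rw [show ![X j₀, X i₀] = Fin.cons (X j₀) ![X i₀] from rfl, linearIndependent_fin_cons]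
      constructor
      · rw [linearIndependent_unique_iff]
        simpa using hx0
      · have : Set.range ![X i₀] = {X i₀} := by
          simp [Set.range_unique]
        rw [this]
        exact hj₀
    · have : Set.range ![X j₀, X i₀] = {X j₀, X i₀} := by
        ext y
        simp [Fin.exists_fin_two, or_comm]
      rw [this]
      exact hl₀
  have hdet := h l₀ j₀ i₀
  obtain ⟨c, hc0, hcv⟩ := (Matrix.exists_vecMul_eq_zero_iff).mpr hdet
  have hcomb : ∑ r, c r • (![X l₀, X j₀, X i₀] r) = 0 := by
    ext a
    have := congrFun hcv a
    simpa [Matrix.vecMul, dotProduct, Fin.sum_univ_three] using this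
  have := Fintype.linearIndependent_iff.mp hind c ?_
  · exact hc0 (funext fun r => this r)
  · exact hcomb

private lemma exists_isometry_of_gram {m : ℕ} (X Y : Fin m → E3)
    (hG : ∀ i j, ⟪X i, X j⟫ = ⟪Y i, Y j⟫) :
    ∃ O : E3 ≃ₗᵢ[ℝ] E3, (∀ i, O (X i) = Y i) ∧
      (finrank ℝ (span ℝ (Set.range X)) ≤ 2 →
        ∃ O' : E3 ≃ₗᵢ[ℝ] E3, (∀ i, O' (X i) = Y i) ∧
          LinearMap.det (O'.toLinearEquiv : E3 →ₗ[ℝ] E3)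
            = -LinearMap.det (O.toLinearEquiv : E3 →ₗ[ℝ] E3)) := by
  classical
  set φ : (Fin m → ℝ) →ₗ[ℝ] E3 := Fintype.linearCombination ℝ X with hφ
  set ψ : (Fin m → ℝ) →ₗ[ℝ] E3 := Fintype.linearCombination ℝ Y with hψ
  have hinner : ∀ c c', ⟪φ c, φ c'⟫ = ⟪ψ c, ψ c'⟫ := by
    intro c c'
    simp only [hφ, hψ, Fintype.linearCombination_apply, sum_inner, inner_sum,
      real_inner_smul_left, real_inner_smul_right, hG]
  have hker : LinearMap.ker φ ≤ LinearMap.ker ψ := by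
    intro c hc
    rw [LinearMap.mem_ker] at hc ⊢
    have : ⟪ψ c, ψ c⟫ = 0 := by rw [← hinner, hc, inner_zero_left]
    exact inner_self_eq_zero.mp this
  set S := LinearMap.range φ with hS
  set f : S →ₗ[ℝ] E3 :=
    ((LinearMap.ker φ).liftQ ψ hker).comp (φ.quotKerEquivRange.symm : S →ₗ[ℝ] _) with hf
  have hfφ : ∀ c, f ⟨φ c, LinearMap.mem_range_self φ c⟩ = ψ c := by
    intro c
    have h1 : φ.quotKerEquivRange.symm ⟨φ c, LinearMap.mem_range_self φ c⟩
        = Submodule.Quotient.mk c := by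
      rw [LinearEquiv.symm_apply_eq]
      exact Subtype.ext (LinearMap.quotKerEquivRange_apply_mk φ c)
    simp [hf, h1]
  have hfinn : ∀ x y : S, ⟪f x, f y⟫ = ⟪(x : E3), (y : E3)⟫ := by
    rintro ⟨x, hx⟩ ⟨y, hy⟩
    obtain ⟨c, rfl⟩ := hx
    obtain ⟨c', rfl⟩ := hy
    rw [hfφ, hfφ, ← hinner]
  -- continue
  have card3 : finrank ℝ E3 = Fintype.card (Fin 3) := by
    simp [finrank_euclideanSpace]
  set d := finrank ℝ S with hdd
  have hd3 : d ≤ 3 := by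
    have := Submodule.finrank_le S
    simpa [finrank_euclideanSpace] using this
  set b₀ : OrthonormalBasis (Fin d) ℝ S := stdOrthonormalBasis ℝ S with hb₀
  -- families to extend
  set sB : Set (Fin 3) := {k | (k : ℕ) < d} with hsB
  set vB : Fin 3 → E3 := fun k => if h : (k : ℕ) < d then (b₀ ⟨k, h⟩ : E3) else 0 with hvB
  set vC : Fin 3 → E3 := fun k => if h : (k : ℕ) < d then f (b₀ ⟨k, h⟩) else 0 with hvC
  have honB : Orthonormal ℝ (sB.restrict vB) := by
    rw [orthonormal_iff_ite]
    rintro ⟨k, hk⟩ ⟨k', hk'⟩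
    have hkd : (k : ℕ) < d := hk
    have hkd' : (k' : ℕ) < d := hk'
    have h1 := (orthonormal_iff_ite.mp b₀.orthonormal) ⟨k, hkd⟩ ⟨k', hkd'⟩
    simp only [Set.restrict, Set.restrict_apply, hvB, dif_pos hkd, dif_pos hkd']
    rw [← Submodule.coe_inner, h1]
    congr 1
    simp [Fin.ext_iff, Subtype.ext_iff]
  have honC : Orthonormal ℝ (sB.restrict vC) := by
    rw [orthonormal_iff_ite]
    rintro ⟨k, hk⟩ ⟨k', hk'⟩
    have hkd : (k : ℕ) < d := hk
    have hkd' : (k' : ℕ) < d := hk'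
    have h1 := (orthonormal_iff_ite.mp b₀.orthonormal) ⟨k, hkd⟩ ⟨k', hkd'⟩
    simp only [Set.restrict, Set.restrict_apply, hvC, dif_pos hkd, dif_pos hkd']
    rw [hfinn, ← Submodule.coe_inner, h1]
    congr 1
    simp [Fin.ext_iff, Subtype.ext_iff]
  obtain ⟨B, hB⟩ := honB.exists_orthonormalBasis_extension_of_card_eq card3
  obtain ⟨C, hC⟩ := honC.exists_orthonormalBasis_extension_of_card_eq card3
  -- the two candidate isometries
  set O : E3 ≃ₗᵢ[ℝ] E3 := B.repr.trans C.repr.symm with hO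
  set O' : E3 ≃ₗᵢ[ℝ] E3 := B.repr.trans (Lneg.trans C.repr.symm) with hO'
  have hXmem : ∀ i, X i ∈ S := by
    intro i
    refine ⟨Pi.single i 1, ?_⟩
    simp [hφ]
  have hXφ : ∀ i, φ (Pi.single i 1) = X i := by intro i; simp [hφ]
  have hYψ : ∀ i, ψ (Pi.single i 1) = Y i := by intro i; simp [hψ]
  -- agreement of an isometry with f on S
  have key : ∀ (T : E3 ≃ₗᵢ[ℝ] E3), (∀ j : Fin d, T (b₀ j : E3) = f (b₀ j)) →
      ∀ i, T (X i) = Y i := by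
    intro T hT i
    have heq : (T.toLinearEquiv : E3 →ₗ[ℝ] E3) ∘ₗ S.subtype = f := by
      apply Basis.ext b₀.toBasis
      intro j
      rw [OrthonormalBasis.coe_toBasis]
      exact hT j
    have h2 : T ((⟨X i, hXmem i⟩ : S) : E3) = f ⟨X i, hXmem i⟩ := by
      have := congrArg (fun g => g ⟨X i, hXmem i⟩) heq
      exact this
    have h3 : f ⟨X i, hXmem i⟩ = Y i := by
      have : (⟨X i, hXmem i⟩ : S) = ⟨φ (Pi.single i 1), LinearMap.mem_range_self φ _⟩ :=
        Subtype.ext (hXφ i).symm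
      rw [this, hfφ, hYψ]
    rw [← h3]
    exact h2
  have hOb : ∀ j : Fin d, O (b₀ j : E3) = f (b₀ j) := by
    intro j
    have hjk : (j : ℕ) < 3 := lt_of_lt_of_le j.isLt hd3
    set k : Fin 3 := ⟨j, hjk⟩ with hk
    have hmem : k ∈ sB := j.isLt
    have h1 : B k = vB k := hB k hmem
    have h2 : C k = vC k := hC k hmem
    have hvbk : vB k = (b₀ j : E3) := by exact dif_pos hmem
    have hvck : vC k = f (b₀ j) := by exact dif_pos hmem
    rw [← hvbk, ← h1, hO]
    show C.repr.symm (B.repr (B k)) = _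
    rw [B.repr_self, C.repr_symm_single, h2, hvck]
  have hOX : ∀ i, O (X i) = Y i := key O hOb
  have hSspan : S = span ℝ (Set.range X) := by
    rw [hS, hφ]
    exact Fintype.range_linearCombination ℝ X
  refine ⟨O, hOX, ?_⟩
  intro hd2'
  have hd2 : d ≤ 2 := by rw [hdd, hSspan]; exact hd2'
  have hO'b : ∀ j : Fin d, O' (b₀ j : E3) = f (b₀ j) := by
    intro j
    have hjk : (j : ℕ) < 3 := lt_of_lt_of_le j.isLt hd3
    set k : Fin 3 := ⟨j, hjk⟩ with hk
    have hmem : k ∈ sB := j.isLt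
    have hk2 : k ≠ 2 := by
      intro h
      have h2 : (j : ℕ) = 2 := by
        have := congrArg (fun x : Fin 3 => (x : ℕ)) h
        simpa [hk] using this
      have h3 := j.isLt
      omega
    have h1 : B k = vB k := hB k hmem
    have h2 : C k = vC k := hC k hmem
    have hvbk : vB k = (b₀ j : E3) := by exact dif_pos hmem
    have hvck : vC k = f (b₀ j) := by exact dif_pos hmem
    rw [← hvbk, ← h1, hO']
    show C.repr.symm (Lneg (B.repr (B k))) = _
    rw [B.repr_self, Lneg_single k hk2, C.repr_symm_single, h2, hvck]
  refine ⟨O', key O' hO'b, ?_⟩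
  have hcomp : (O.toLinearEquiv : E3 →ₗ[ℝ] E3)
      = (C.repr.symm.toLinearEquiv : E3 →ₗ[ℝ] E3) ∘ₗ (B.repr.toLinearEquiv : E3 →ₗ[ℝ] E3) := rfl
  have hcomp' : (O'.toLinearEquiv : E3 →ₗ[ℝ] E3)
      = ((C.repr.symm.toLinearEquiv : E3 →ₗ[ℝ] E3) ∘ₗ (Lneg.toLinearEquiv : E3 →ₗ[ℝ] E3))
        ∘ₗ (B.repr.toLinearEquiv : E3 →ₗ[ℝ] E3) := rfl
  rw [hcomp, hcomp', LinearMap.det_comp, LinearMap.det_comp, LinearMap.det_comp, Lneg_det]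
  ring


end Aux

section Main
open Module Submodule RealInnerProductSpace

/-- Complete invariants for the diagonal `SO₃`-action on tuples of real
quaternions: two tuples have the same invariants `L₁, L₂, L₃` iff a single
special orthogonal matrix transforms the imaginary parts of one tuple into
those of the other, while the real parts agree. -/
theorem quaternion_complete_invariants {m : ℕ} (v w : Fin m → Quaternion ℝ) :
    ((∀ i, (v i).re = (w i).re) ∧
     (∀ i j, ((v i - star (v i)) * (v j - star (v j))).re =
        ((w i - star (w i)) * (w j - star (w j))).re) ∧
     (∀ i j l, ((v i - star (v i)) * (v j - star (v j)) * (v l - star (v l))).re =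
        ((w i - star (w i)) * (w j - star (w j)) * (w l - star (w l))).re))
    ↔
    ∃ R : Matrix (Fin 3) (Fin 3) ℝ, Rᵀ * R = 1 ∧ R.det = 1 ∧
      ∀ i, (w i).re = (v i).re ∧ R.mulVec (imVec (v i)) = imVec (w i) := by
  constructor
  · rintro ⟨h1, h2, h3⟩
    set X : Fin m → E3 := fun i => WithLp.toLp 2 (imVec (v i)) with hX
    set Y : Fin m → E3 := fun i => WithLp.toLp 2 (imVec (w i)) with hY
    have hgram : ∀ i j, (X i : Fin 3 → ℝ) ⬝ᵥ (X j : Fin 3 → ℝ)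
        = (Y i : Fin 3 → ℝ) ⬝ᵥ (Y j : Fin 3 → ℝ) := by
      intro i j
      show imVec (v i) ⬝ᵥ imVec (v j) = imVec (w i) ⬝ᵥ imVec (w j)
      have := h2 i j
      rw [imVec_pair_re, imVec_pair_re] at this
      linarith
    have hG : ∀ i j, ⟪X i, X j⟫ = ⟪Y i, Y j⟫ := by
      intro i j
      rw [inner_eq_dot, inner_eq_dot]
      exact hgram i j
    have hdets : ∀ i j l, (Matrix.of ![(X i : Fin 3 → ℝ), X j, X l]).det
        = (Matrix.of ![(Y i : Fin 3 → ℝ), Y j, Y l]).det := by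
      intro i j l
      show (Matrix.of ![imVec (v i), imVec (v j), imVec (v l)]).det
        = (Matrix.of ![imVec (w i), imVec (w j), imVec (w l)]).det
      have := h3 i j l
      rw [imVec_triple_re, imVec_triple_re] at this
      linarith
    obtain ⟨O, hOX, hOalt⟩ := exists_isometry_of_gram X Y hG
    have horth := matOf_orth O
    have hpm : (matOf O).det = 1 ∨ (matOf O).det = -1 := by
      apply mul_self_eq_one_iff.mp
      have := congrArg Matrix.det horth
      rwa [Matrix.det_mul, Matrix.det_transpose, Matrix.det_one] at this
    have hmv : ∀ i, (matOf O).mulVec (imVec (v i)) = imVec (w i) := by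
      intro i
      exact (matOf_mulVec O (imVec (v i))).trans (congrArg WithLp.ofLp (hOX i))
    by_cases hall : ∀ i j l, (Matrix.of ![(X i : Fin 3 → ℝ), X j, X l]).det = 0
    · have hd2 := rank_le_two_of_dets_zero X hall
      obtain ⟨O', hO'X, hdet'⟩ := hOalt hd2
      rcases hpm with hpm | hpm
      · exact ⟨matOf O, horth, hpm, fun i => ⟨(h1 i).symm, hmv i⟩⟩
      · refine ⟨matOf O', matOf_orth O', ?_, fun i =>
          ⟨(h1 i).symm, (matOf_mulVec O' (imVec (v i))).trans (congrArg WithLp.ofLp (hO'X i))⟩⟩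
        rw [matOf_det, hdet', ← matOf_det, hpm]
        norm_num
    · push_neg at hall
      obtain ⟨i, j, l, hne⟩ := hall
      refine ⟨matOf O, horth, ?_, fun i => ⟨(h1 i).symm, hmv i⟩⟩
      have hrel := rows_mul (matOf O) (Matrix.of ![(Y i : Fin 3 → ℝ), Y j, Y l])
        (X i) (X j) (X l) (hmv i) (hmv j) (hmv l)
      have := hdets i j l
      rw [hrel, Matrix.det_mul, Matrix.det_transpose] at this
      have h9 : (Matrix.of ![(X i : Fin 3 → ℝ), X j, X l]).det * ((matOf O).det - 1) = 0 := by
        linear_combination -this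
      rcases mul_eq_zero.mp h9 with h9 | h9
      · exact absurd h9 hne
      · linarith
  · rintro ⟨R, hR, hdet, hRw⟩
    refine ⟨fun i => ((hRw i).1).symm, ?_, ?_⟩
    · intro i j
      rw [imVec_pair_re, imVec_pair_re, ← (hRw i).2, ← (hRw j).2, dot_pres hR]
    · intro i j l
      rw [imVec_triple_re, imVec_triple_re]
      have hrel := rows_mul R (Matrix.of ![imVec (w i), imVec (w j), imVec (w l)])
        (imVec (v i)) (imVec (v j)) (imVec (v l)) ((hRw i).2) ((hRw j).2) ((hRw l).2)
      rw [hrel, Matrix.det_mul, Matrix.det_transpose, hdet, mul_one]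

end Main
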